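/- Fix η > 0 and 0 < s < 2η/σ². Let r₁ < r₂ be the two real roots of the quadratic 2σ²x² + [a² + 2σ²s(a+η) − 1]x + α₁ = 0 and set q = ([a² + 2σ²s(a+η)] + 2σ²r₁)/([a² + 2σ²s(a+η)] + 2σ²r₂) and c = (α₁ − r₁)/(α₁ − r₂). Then: (i) q ∈ (0,1); (ii) for every ℓ ≥ 1, α_ℓ = r₁ + (r₁ − r₂)·c·q^{ℓ−1}/(1 − c·q^{ℓ−1}); (iii) the sequence (α_ℓ) is nonincreasing with α_ℓ ≤ α₁ < 0 for all ℓ ≥ 1; and (iv) α_ℓ → r₁ as ℓ → ∞. -/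

import Mathlib

open Filter

/-- The sequence `α_ℓ` from the paper: `α₁ = (σ²s² − 2ηs)/2` and
`α_ℓ = ([a² + 2σ²s(a+η)]·α_{ℓ−1} + α₁)/(1 − 2σ²α_{ℓ−1})` for `ℓ ≥ 2`. -/
noncomputable def alphaSeq (a σ η s : ℝ) : ℕ → ℝ
  | 0 => 0
  | 1 => (σ ^ 2 * s ^ 2 - 2 * η * s) / 2
  | (ℓ + 2) =>
      ((a ^ 2 + 2 * σ ^ 2 * s * (a + η)) * alphaSeq a σ η s (ℓ + 1)
            + (σ ^ 2 * s ^ 2 - 2 * η * s) / 2)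
        / (1 - 2 * σ ^ 2 * alphaSeq a σ η s (ℓ + 1))


set_option maxHeartbeats 1000000 in
lemma aux_main (A B α₁ r₁ r₂ q c : ℝ) (f : ℕ → ℝ)
    (hB : 0 < B) (hα1 : α₁ < 0) (hr : r₁ < r₂)
    (hroot₁ : B * r₁ ^ 2 + (A - 1) * r₁ + α₁ = 0)
    (hroot₂ : B * r₂ ^ 2 + (A - 1) * r₂ + α₁ = 0)
    (hq : q = (A + B * r₁) / (A + B * r₂))
    (hc : c = (α₁ - r₁) / (α₁ - r₂))
    (hAB : 0 < A + B * α₁) (hA : 1 < A)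
    (hf1 : f 1 = α₁)
    (hfrec : ∀ n : ℕ, f (n + 2) = (A * f (n + 1) + α₁) / (1 - B * f (n + 1))) :
    (0 < q ∧ q < 1) ∧
    (∀ ℓ : ℕ, 1 ≤ ℓ → f ℓ = r₁ + (r₁ - r₂) * (c * q ^ (ℓ - 1)) / (1 - c * q ^ (ℓ - 1))) ∧
    (∀ ℓ : ℕ, 1 ≤ ℓ → f (ℓ + 1) ≤ f ℓ) ∧
    (∀ ℓ : ℕ, 1 ≤ ℓ → f ℓ ≤ f 1) ∧
    f 1 < 0 ∧
    Tendsto f atTop (nhds r₁) := by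
  have hrne : r₁ - r₂ ≠ 0 := sub_ne_zero_of_ne (ne_of_lt hr)
  have hsum : B * (r₁ + r₂) = 1 - A := by
    have h2 : (r₁ - r₂) * (B * (r₁ + r₂) - (1 - A)) = 0 := by
      linear_combination hroot₁ - hroot₂
    rcases mul_eq_zero.mp h2 with h3 | h3
    · exact absurd h3 hrne
    · linarith
  have hprod : B * (r₁ * r₂) = α₁ := by linear_combination r₁ * hsum - hroot₁
  have hprodAB : (A + B * r₁) * (A + B * r₂) = A + B * α₁ := by
    linear_combination A * hsum + B * hprod
  have hs2 : (A + B * r₁) + (A + B * r₂) = A + 1 := by linear_combination hsum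
  have hlt : A + B * r₁ < A + B * r₂ := by nlinarith
  have hpos2 : 0 < A + B * r₂ := by nlinarith
  have hpos1 : 0 < A + B * r₁ := by nlinarith
  have hq0 : 0 < q := hq ▸ div_pos hpos1 hpos2
  have hq1 : q < 1 := by rw [hq]; exact (div_lt_one hpos2).mpr hlt
  have hqe : A + B * r₁ = q * (A + B * r₂) := by
    rw [hq]; field_simp
  have hα1r : B * (α₁ - r₁) * (α₁ - r₂) = α₁ * (A + B * α₁) := by
    linear_combination (-α₁) * hsum + hprod
  have hneg : α₁ * (A + B * α₁) < 0 := mul_neg_of_neg_of_pos hα1 hAB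
  have hint : (α₁ - r₁) * (α₁ - r₂) < 0 := by nlinarith
  have hr₁α : r₁ < α₁ := by nlinarith
  have hαr₂ : α₁ < r₂ := by nlinarith
  have hcneg : c < 0 := by
    rw [hc]; exact div_neg_of_pos_of_neg (by linarith) (by linarith)
  have hd2 : α₁ - r₂ ≠ 0 := ne_of_lt (by linarith)
  have hbase : α₁ - r₁ = c * (α₁ - r₂) := by
    rw [hc, div_mul_cancel₀ _ hd2]
  have tneg : ∀ n : ℕ, c * q ^ n < 0 :=
    fun n => mul_neg_of_neg_of_pos hcneg (pow_pos hq0 n)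
  have tge : ∀ n : ℕ, c ≤ c * q ^ n := by
    intro n
    nlinarith [pow_le_one₀ hq0.le hq1.le (n := n), pow_pos hq0 n]
  have main : ∀ n : ℕ, f (n+1) - r₁ = (c * q ^ n) * (f (n+1) - r₂) ∧ f (n+1) ≤ α₁ := by
    intro n
    induction n with
    | zero =>
      refine ⟨?_, by rw [hf1]⟩
      rw [hf1]; simpa using hbase
    | succ n ih =>
      obtain ⟨ih1, ih2⟩ := ih
      have hfn : f (n+1) < 0 := lt_of_le_of_lt ih2 hα1
      have hD : 0 < 1 - B * f (n+1) := by
        have := mul_neg_of_pos_of_neg hB hfn; linarith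
      have key : ∀ r : ℝ, B * r ^ 2 + (A - 1) * r + α₁ = 0 →
          (1 - B * f (n+1)) * (f (n+2) - r) = (f (n+1) - r) * (A + B * r) := by
        intro r hroot
        rw [hfrec n]
        have hDne : (1 : ℝ) - B * f (n+1) ≠ 0 := ne_of_gt hD
        field_simp
        linear_combination hroot
      have k1 := key r₁ hroot₁
      have k2 := key r₂ hroot₂
      have inv : f (n+2) - r₁ = (c * q ^ (n+1)) * (f (n+2) - r₂) := by
        have hcalc : (1 - B * f (n+1)) * (f (n+2) - r₁)
            = (1 - B * f (n+1)) * ((c * q ^ (n+1)) * (f (n+2) - r₂)) := by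
          calc (1 - B * f (n+1)) * (f (n+2) - r₁)
              = (f (n+1) - r₁) * (A + B * r₁) := k1
            _ = ((c * q ^ n) * (f (n+1) - r₂)) * (q * (A + B * r₂)) := by rw [ih1, hqe]
            _ = (c * q ^ (n+1)) * ((f (n+1) - r₂) * (A + B * r₂)) := by ring
            _ = (c * q ^ (n+1)) * ((1 - B * f (n+1)) * (f (n+2) - r₂)) := by rw [k2]
            _ = (1 - B * f (n+1)) * ((c * q ^ (n+1)) * (f (n+2) - r₂)) := by ring
        exact mul_left_cancel₀ (ne_of_gt hD) hcalc
      have ht' := tneg (n+1)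
      have htc := tge (n+1)
      have h1t : 0 < 1 - c * q ^ (n+1) := by linarith
      have h1c : 0 < 1 - c := by linarith
      have e1 : f (n+2) * (1 - c * q ^ (n+1)) = r₁ - (c * q ^ (n+1)) * r₂ := by
        linear_combination inv
      have e2 : α₁ * (1 - c) = r₁ - c * r₂ := by linear_combination hbase
      have e3 : (α₁ - f (n+2)) * ((1 - c * q ^ (n+1)) * (1 - c))
          = (c * q ^ (n+1) - c) * (r₂ - r₁) := by
        linear_combination (1 - c * q ^ (n+1)) * e2 - (1 - c) * e1
      have hN : 0 ≤ (c * q ^ (n+1) - c) * (r₂ - r₁) :=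
        mul_nonneg (by linarith) (by linarith)
      have h5 : 0 ≤ (α₁ - f (n+2)) * ((1 - c * q ^ (n+1)) * (1 - c)) := by
        rw [e3]; exact hN
      have step : f (n+2) ≤ α₁ := by
        rcases le_or_gt 0 (α₁ - f (n+2)) with h | h
        · linarith
        · exfalso
          have := mul_neg_of_neg_of_pos h (mul_pos h1t h1c)
          linarith
      exact ⟨inv, step⟩
  have form : ∀ n : ℕ, f (n+1) = r₁ + (r₁ - r₂) * (c * q ^ n) / (1 - c * q ^ n) := by
    intro n
    have h1t : 0 < 1 - c * q ^ n := by linarith [tneg n]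
    have e1 : f (n+1) * (1 - c * q ^ n) = r₁ - (c * q ^ n) * r₂ := by
      linear_combination (main n).1
    field_simp
    linear_combination e1
  refine ⟨⟨hq0, hq1⟩, ?_, ?_, ?_, hf1 ▸ hα1, ?_⟩
  · intro ℓ hℓ
    obtain ⟨n, rfl⟩ := Nat.exists_eq_add_of_le hℓ
    have h : 1 + n = n + 1 := Nat.add_comm 1 n
    rw [h]
    simpa using form n
  · intro ℓ hℓ
    obtain ⟨n, rfl⟩ := Nat.exists_eq_add_of_le hℓ
    have h : 1 + n = n + 1 := Nat.add_comm 1 n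
    rw [h]
    have e1n : f (n+1) * (1 - c * q ^ n) = r₁ - (c * q ^ n) * r₂ := by
      linear_combination (main n).1
    have e1n1 : f (n+2) * (1 - c * q ^ (n+1)) = r₁ - (c * q ^ (n+1)) * r₂ := by
      linear_combination (main (n+1)).1
    have htn := tneg n
    have h1t : 0 < 1 - c * q ^ n := by linarith
    have h1t' : 0 < 1 - c * q ^ (n+1) := by linarith [tneg (n+1)]
    have hstep : c * q ^ n ≤ c * q ^ (n+1) := by
      have h2 : c * q ^ (n+1) - c * q ^ n = c * q ^ n * (q - 1) := by ring
      have h3 : 0 < c * q ^ n * (q - 1) :=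
        mul_pos_of_neg_of_neg htn (by linarith)
      linarith
    have e3 : (f (n+1) - f (n+2)) * ((1 - c * q ^ (n+1)) * (1 - c * q ^ n))
        = (c * q ^ (n+1) - c * q ^ n) * (r₂ - r₁) := by
      linear_combination (1 - c * q ^ (n+1)) * e1n - (1 - c * q ^ n) * e1n1
    have hN : 0 ≤ (c * q ^ (n+1) - c * q ^ n) * (r₂ - r₁) :=
      mul_nonneg (by linarith) (by linarith)
    have h5 : 0 ≤ (f (n+1) - f (n+2)) * ((1 - c * q ^ (n+1)) * (1 - c * q ^ n)) := by
      rw [e3]; exact hN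
    rcases le_or_gt 0 (f (n+1) - f (n+2)) with h | h
    · linarith
    · exfalso
      have := mul_neg_of_neg_of_pos h (mul_pos h1t' h1t)
      linarith
  · intro ℓ hℓ
    obtain ⟨n, rfl⟩ := Nat.exists_eq_add_of_le hℓ
    have h : 1 + n = n + 1 := Nat.add_comm 1 n
    rw [h, hf1]
    exact (main n).2
  · have h0 : Tendsto (fun n : ℕ => c * q ^ n) atTop (nhds 0) := by
      have := tendsto_pow_atTop_nhds_zero_of_lt_one hq0.le hq1
      simpa using this.const_mul c
    have hden : Tendsto (fun n : ℕ => 1 - c * q ^ n) atTop (nhds 1) := by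
      simpa using tendsto_const_nhds.sub h0
    have hg : Tendsto (fun n : ℕ => r₁ + (r₁ - r₂) * (c * q ^ n) / (1 - c * q ^ n))
        atTop (nhds r₁) := by
      have h1 : Tendsto (fun n : ℕ => (r₁ - r₂) * (c * q ^ n) / (1 - c * q ^ n))
          atTop (nhds 0) := by
        simpa [Pi.div_def] using (h0.const_mul (r₁ - r₂)).div hden one_ne_zero
      simpa using tendsto_const_nhds.add h1
    have hcomp : Tendsto (fun ℓ : ℕ => r₁ + (r₁ - r₂) * (c * q ^ (ℓ - 1)) / (1 - c * q ^ (ℓ - 1)))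
        atTop (nhds r₁) := hg.comp (tendsto_sub_atTop_nat 1)
    refine hcomp.congr' ?_
    filter_upwards [eventually_ge_atTop 1] with ℓ hℓ
    obtain ⟨n, rfl⟩ := Nat.exists_eq_add_of_le hℓ
    have h : 1 + n = n + 1 := Nat.add_comm 1 n
    rw [h]
    simpa using (form n).symm


theorem statement9 (a σ η s : ℝ) (ha : 1 < a) (hσ : 0 < σ) (hη : 0 < η)
    (hs0 : 0 < s) (hs1 : s < 2 * η / σ ^ 2)
    (r₁ r₂ : ℝ) (hr : r₁ < r₂)
    (hroot₁ : 2 * σ ^ 2 * r₁ ^ 2 + (a ^ 2 + 2 * σ ^ 2 * s * (a + η) - 1) * r₁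
        + alphaSeq a σ η s 1 = 0)
    (hroot₂ : 2 * σ ^ 2 * r₂ ^ 2 + (a ^ 2 + 2 * σ ^ 2 * s * (a + η) - 1) * r₂
        + alphaSeq a σ η s 1 = 0)
    (q c : ℝ)
    (hq : q = ((a ^ 2 + 2 * σ ^ 2 * s * (a + η)) + 2 * σ ^ 2 * r₁)
        / ((a ^ 2 + 2 * σ ^ 2 * s * (a + η)) + 2 * σ ^ 2 * r₂))
    (hc : c = (alphaSeq a σ η s 1 - r₁) / (alphaSeq a σ η s 1 - r₂)) :
    -- (i) q ∈ (0,1)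
    (0 < q ∧ q < 1) ∧
    -- (ii) closed form for α_ℓ
    (∀ ℓ : ℕ, 1 ≤ ℓ →
      alphaSeq a σ η s ℓ
        = r₁ + (r₁ - r₂) * (c * q ^ (ℓ - 1)) / (1 - c * q ^ (ℓ - 1))) ∧
    -- (iii) nonincreasing with α_ℓ ≤ α₁ < 0
    (∀ ℓ : ℕ, 1 ≤ ℓ → alphaSeq a σ η s (ℓ + 1) ≤ alphaSeq a σ η s ℓ) ∧
    (∀ ℓ : ℕ, 1 ≤ ℓ → alphaSeq a σ η s ℓ ≤ alphaSeq a σ η s 1) ∧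
    alphaSeq a σ η s 1 < 0 ∧
    -- (iv) α_ℓ → r₁
    Tendsto (fun ℓ : ℕ => alphaSeq a σ η s ℓ) atTop (nhds r₁) := by
  have hα1 : alphaSeq a σ η s 1 = (σ ^ 2 * s ^ 2 - 2 * η * s) / 2 := rfl
  have hσ2 : 0 < σ ^ 2 := pow_pos hσ 2
  have hα1neg : alphaSeq a σ η s 1 < 0 := by
    rw [hα1]
    have h2 : s * σ ^ 2 < 2 * η := (lt_div_iff₀ hσ2).mp hs1
    nlinarith
  have hAB : 0 < (a ^ 2 + 2 * σ ^ 2 * s * (a + η)) + 2 * σ ^ 2 * alphaSeq a σ η s 1 := by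
    rw [hα1]
    have h3 : ((a ^ 2 + 2 * σ ^ 2 * s * (a + η)) + 2 * σ ^ 2 * ((σ ^ 2 * s ^ 2 - 2 * η * s) / 2))
        = (a + σ ^ 2 * s) ^ 2 := by ring
    rw [h3]
    have h4 : 0 < a + σ ^ 2 * s := by nlinarith [mul_pos hσ2 hs0]
    exact pow_pos h4 2
  have hA : 1 < a ^ 2 + 2 * σ ^ 2 * s * (a + η) := by
    nlinarith [mul_pos (mul_pos hσ2 hs0) (show (0:ℝ) < a + η by linarith)]
  exact aux_main (a ^ 2 + 2 * σ ^ 2 * s * (a + η)) (2 * σ ^ 2) (alphaSeq a σ η s 1)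
    r₁ r₂ q c (alphaSeq a σ η s) (by positivity) hα1neg hr hroot₁ hroot₂ hq hc hAB hA
    rfl (fun n => rfl)
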